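/- Let G be a walk-regular graph on n vertices with d+1 distinct eigenvalues θ_0 > θ_1 > ... > θ_d (multiplicities m_0 = 1, m_1, ..., m_d) and diameter D = d. Let π_i = Π_{j ≠ i} |θ_i − θ_j|. Then for every even index 2i with 1 ≤ 2i ≤ d such that m_{2i} ≠ π_0/π_{2i}, the (d−1)-independence number satisfies α_{d−1}(G) ≤ m_{2i}. -/

import Mathlib

open Matrix Polynomial

/-- The `k`-independence number of a graph. -/
noncomputable def kIndepNum {V : Type*} [Fintype V] (G : SimpleGraph V) (k : ℕ) : ℕ :=
  sSup {r | ∃ s : Finset V, s.card = r ∧ ∀ u ∈ s, ∀ v ∈ s, u ≠ v → k < G.dist u v}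

section Aux

variable {V : Type*} [Fintype V] [DecidableEq V]

/-- Conjugation by a unitary matrix, as an algebra homomorphism. -/
noncomputable def conjAH (U : Matrix.unitaryGroup V ℝ) : Matrix V V ℝ →ₐ[ℝ] Matrix V V ℝ where
  toFun M := (U : Matrix V V ℝ) * M * star (U : Matrix V V ℝ)
  map_one' := by
    show (U : Matrix V V ℝ) * 1 * star (U : Matrix V V ℝ) = 1
    rw [Matrix.mul_one]
    exact (Matrix.mem_unitaryGroup_iff.mp U.2)
  map_mul' M N := by
    have h : star (U : Matrix V V ℝ) * (U : Matrix V V ℝ) = 1 :=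
      Matrix.mem_unitaryGroup_iff'.mp U.2
    simp only [Matrix.mul_assoc]
    rw [← Matrix.mul_assoc (star (U : Matrix V V ℝ)) (U : Matrix V V ℝ), h, Matrix.one_mul]
  map_zero' := by simp
  map_add' M N := by
    simp [Matrix.add_mul, Matrix.mul_add]
  commutes' r := by
    simp only [Algebra.algebraMap_eq_smul_one]
    rw [Matrix.mul_smul, mul_one, Matrix.smul_mul]
    congr 1
    exact Matrix.mem_unitaryGroup_iff.mp U.2

lemma aeval_unitary_conj (U : Matrix.unitaryGroup V ℝ) (D : Matrix V V ℝ) (p : ℝ[X]) :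
    aeval ((U : Matrix V V ℝ) * D * star (U : Matrix V V ℝ)) p
      = (U : Matrix V V ℝ) * (aeval D p) * star (U : Matrix V V ℝ) := by
  have := Polynomial.aeval_algHom_apply (conjAH U) D p
  simpa [conjAH] using this

lemma aeval_diagonal' (μ : V → ℝ) (p : ℝ[X]) :
    aeval (Matrix.diagonal μ) p = Matrix.diagonal (fun v => p.eval (μ v)) := by
  have := Polynomial.aeval_algHom_apply (Matrix.diagonalAlgHom (n := V) (α := ℝ) ℝ) μ p
  simp only [Matrix.diagonalAlgHom_apply] at this
  rw [this]
  have h2 : ((aeval μ) p : V → ℝ) = fun v => eval (μ v) p := by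
    funext v
    rw [Polynomial.aeval_fn_apply, Polynomial.aeval_def, Polynomial.eval₂_eq_eval_map]
    simp
  rw [h2]

end Aux

section Aux2

variable {V : Type*} [Fintype V] [DecidableEq V]

lemma charpoly_unitary_conj (U : Matrix.unitaryGroup V ℝ) (D : Matrix V V ℝ) :
    ((U : Matrix V V ℝ) * D * star (U : Matrix V V ℝ)).charpoly = D.charpoly := by
  unfold Matrix.charpoly
  set f := (C : ℝ →+* ℝ[X]) with hf
  have hcomm : ∀ M : Matrix V V ℝ[X], Matrix.scalar V (X : ℝ[X]) * M = M * Matrix.scalar V X :=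
    fun M => (Matrix.scalar_commute (X : ℝ[X]) (fun r => Commute.all _ _) M)
  have h1 : f.mapMatrix (U : Matrix V V ℝ) * f.mapMatrix (star (U : Matrix V V ℝ)) = 1 := by
    rw [← _root_.map_mul, Matrix.mem_unitaryGroup_iff.mp U.2, _root_.map_one]
  have key : charmatrix ((U : Matrix V V ℝ) * D * star (U : Matrix V V ℝ))
      = f.mapMatrix (U : Matrix V V ℝ) * charmatrix D * f.mapMatrix (star (U : Matrix V V ℝ)) := by
    unfold charmatrix
    rw [Matrix.mul_sub, Matrix.sub_mul]
    congr 1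
    · rw [Matrix.mul_assoc, hcomm (f.mapMatrix (star (U : Matrix V V ℝ))), ← Matrix.mul_assoc,
        h1, Matrix.one_mul]
    · show f.mapMatrix ((U : Matrix V V ℝ) * D * star (U : Matrix V V ℝ)) = _
      rw [_root_.map_mul, _root_.map_mul]
  rw [key, Matrix.det_mul, Matrix.det_mul]
  have h2 : (f.mapMatrix ((U : Matrix V V ℝ))).det * (f.mapMatrix (star (U : Matrix V V ℝ))).det
      = 1 := by
    rw [← RingHom.map_det, ← RingHom.map_det, ← _root_.map_mul, ← Matrix.det_mul,
      Matrix.mem_unitaryGroup_iff.mp U.2, Matrix.det_one, _root_.map_one]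
  rw [mul_right_comm, h2, one_mul]

lemma charpoly_diagonal' (μ : V → ℝ) :
    (Matrix.diagonal μ).charpoly = ∏ v, (X - C (μ v)) := by
  unfold Matrix.charpoly
  have : charmatrix (Matrix.diagonal μ) = Matrix.diagonal (fun v => (X : ℝ[X]) - C (μ v)) := by
    ext i j
    by_cases h : i = j
    · subst h; simp
    · rw [charmatrix_apply_ne _ _ _ h, Matrix.diagonal_apply_ne _ h, Matrix.diagonal_apply_ne _ h]
      simp
  rw [this, Matrix.det_diagonal]

lemma pow_entry_zero_of_lt_dist (G : SimpleGraph V) [DecidableRel G.Adj] (u v : V) (k : ℕ)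
    (hk : k < G.dist u v) : ((G.adjMatrix ℝ) ^ k) u v = 0 := by
  rw [SimpleGraph.adjMatrix_pow_apply_eq_card_walk]
  norm_cast
  rw [Fintype.card_eq_zero_iff]
  refine ⟨fun p => ?_⟩
  have : G.dist u v ≤ k := p.2 ▸ SimpleGraph.dist_le p.1
  omega

lemma aeval_entry_dist (G : SimpleGraph V) [DecidableRel G.Adj] (u v : V) (p : ℝ[X])
    (hp : p.Monic) (hdeg : p.natDegree = G.dist u v) :
    (aeval (G.adjMatrix ℝ) p) u v = ((G.adjMatrix ℝ) ^ (G.dist u v)) u v := by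
  rw [Polynomial.aeval_eq_sum_range, hdeg]
  have : (∑ i ∈ Finset.range (G.dist u v + 1), p.coeff i • (G.adjMatrix ℝ) ^ i) u v
      = ∑ i ∈ Finset.range (G.dist u v + 1), p.coeff i * ((G.adjMatrix ℝ) ^ i) u v := by
    rw [Matrix.sum_apply]
    simp
  rw [this, Finset.sum_range_succ]
  rw [Finset.sum_eq_zero (fun i hi => by
    rw [pow_entry_zero_of_lt_dist G u v i (Finset.mem_range.mp hi), mul_zero]), zero_add]
  rw [← hdeg, Polynomial.Monic.coeff_natDegree hp, one_mul]

lemma aeval_mulVec_eigen (A : Matrix V V ℝ) (x : V → ℝ) (k : ℝ) (hx : A *ᵥ x = k • x)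
    (p : ℝ[X]) : (aeval A p) *ᵥ x = p.eval k • x := by
  have hpow : ∀ j : ℕ, (A ^ j) *ᵥ x = (k ^ j) • x := by
    intro j
    induction j with
    | zero => simp
    | succ j ih =>
        rw [pow_succ', ← Matrix.mulVec_mulVec, ih, Matrix.mulVec_smul, hx, smul_smul, pow_succ,
          mul_comm]
  rw [Polynomial.aeval_eq_sum_range, Polynomial.eval_eq_sum_range]
  ext a
  have step : ((∑ i ∈ Finset.range (p.natDegree + 1), p.coeff i • A ^ i) *ᵥ x) a
      = ∑ i ∈ Finset.range (p.natDegree + 1), p.coeff i * (((A ^ i) *ᵥ x) a) := by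
    simp only [Matrix.mulVec, dotProduct, Finset.sum_apply, Matrix.sum_apply,
      Pi.smul_apply, Matrix.smul_apply, smul_eq_mul, Finset.sum_mul]
    rw [Finset.sum_comm]
    refine Finset.sum_congr rfl fun i _ => ?_
    rw [Finset.mul_sum]
    exact Finset.sum_congr rfl fun b _ => by ring
  rw [step]
  simp only [hpow, Pi.smul_apply, smul_eq_mul, Finset.sum_mul]
  exact Finset.sum_congr rfl fun i _ => by ring

end Aux2

section Aux3
variable {d : ℕ}

lemma prod_sub_eq_prod_abs (θ : Fin (d + 1) → ℝ) (hθ : StrictAnti θ) (i : Fin (d + 1))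
    (hie : Even (i : ℕ)) :
    ∏ j ∈ Finset.univ.erase i, (θ i - θ j) = ∏ j ∈ Finset.univ.erase i, |θ i - θ j| := by
  have key : ∀ j ∈ Finset.univ.erase i, θ i - θ j
      = (if j < i then (-1 : ℝ) else 1) * |θ i - θ j| := by
    intro j hj
    have hne : j ≠ i := Finset.ne_of_mem_erase hj
    rcases lt_or_gt_of_ne hne with h | h
    · have : θ i - θ j < 0 := sub_neg.mpr (hθ h)
      rw [if_pos h, abs_of_neg this]; ring
    · have : 0 < θ i - θ j := sub_pos.mpr (hθ h)
      rw [if_neg (not_lt.mpr h.le), abs_of_pos this]; ring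
  rw [Finset.prod_congr rfl key, Finset.prod_mul_distrib]
  have hfilter : (Finset.univ.erase i).filter (· < i) = Finset.Iio i := by
    ext j
    simp only [Finset.mem_filter, Finset.mem_erase, Finset.mem_univ, Finset.mem_Iio, and_true,
      true_and]
    exact ⟨fun h => h.2, fun h => ⟨h.ne, h⟩⟩
  rw [Finset.prod_ite, Finset.prod_const, Finset.prod_const, one_pow, mul_one, hfilter,
    Fin.card_Iio, Even.neg_one_pow hie, one_mul]

lemma entry_unitary_diag (V : Type*) [Fintype V] [DecidableEq V]
    (U : Matrix.unitaryGroup V ℝ) (w : V → ℝ) (a b : V) :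
    ((U : Matrix V V ℝ) * Matrix.diagonal w * star (U : Matrix V V ℝ)) a b
      = ∑ v, w v * (U : Matrix V V ℝ) a v * (U : Matrix V V ℝ) b v := by
  rw [Matrix.mul_apply]
  refine Finset.sum_congr rfl fun v _ => ?_
  rw [Matrix.mul_apply, Finset.sum_eq_single v (fun c _ hc => by
    rw [Matrix.diagonal_apply_ne _ hc, mul_zero]) (by simp)]
  rw [Matrix.diagonal_apply_eq]
  have : (star (U : Matrix V V ℝ)) v b = (U : Matrix V V ℝ) b v := by
    simp [Matrix.star_apply]
  rw [this]; ring
end Aux3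


/-- **Theorem (inertia bound, even indices).** Let `G` be walk-regular with `d+1`
distinct eigenvalues `θ_0 > ⋯ > θ_d` (multiplicities `m_0 = 1, m_1, …, m_d`) and
diameter `D = d`, and let `π_i = Π_{j ≠ i} |θ_i − θ_j|`. Then for every even index
`2i` with `1 ≤ 2i ≤ d` such that `m_{2i} ≠ π_0/π_{2i}`, one has `α_{d−1}(G) ≤ m_{2i}`. -/
theorem stmt12 {V : Type*} [Fintype V] [DecidableEq V] (G : SimpleGraph V)
    [DecidableRel G.Adj] (d : ℕ) (hd : 1 ≤ d)
    (θ : Fin (d + 1) → ℝ) (hθ : StrictAnti θ) (m : Fin (d + 1) → ℕ) (hm0 : m 0 = 1)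
    (hroots : (G.adjMatrix ℝ).charpoly.roots =
      Finset.univ.val.bind fun i => Multiset.replicate (m i) (θ i))
    (hwr : ∀ p : Polynomial ℝ, ∀ u v : V,
      (Polynomial.aeval (G.adjMatrix ℝ) p) u u = (Polynomial.aeval (G.adjMatrix ℝ) p) v v)
    (hdiam : (∀ u v : V, G.dist u v ≤ d) ∧ ∃ u v : V, G.dist u v = d) :
    ∀ i : Fin (d + 1), Even (i : ℕ) → 1 ≤ (i : ℕ) →
      (m i : ℝ) ≠ (∏ j ∈ Finset.univ.erase (0 : Fin (d + 1)), |θ 0 - θ j|) /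
        (∏ j ∈ Finset.univ.erase i, |θ i - θ j|) →
      kIndepNum G (d - 1) ≤ m i := by
  classical
  intro i hie hi1 hne
  set A := G.adjMatrix ℝ with hAdef
  have hA : A.IsHermitian := by
    rw [Matrix.IsHermitian, Matrix.conjTranspose]
    ext a b
    simp [hAdef, SimpleGraph.adjMatrix_apply, SimpleGraph.adj_comm]
  set U := hA.eigenvectorUnitary with hUdef
  set μ := hA.eigenvalues with hμdef
  have hspec : A = (U : Matrix V V ℝ) * Matrix.diagonal μ * star (U : Matrix V V ℝ) := by
    have h := hA.spectral_theorem
    have h2 : (RCLike.ofReal ∘ hA.eigenvalues : V → ℝ) = μ := by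
      funext v; simp [hμdef]
    rw [h2] at h
    exact h
  have haeval : ∀ p : ℝ[X], aeval A p
      = (U : Matrix V V ℝ) * Matrix.diagonal (fun v => p.eval (μ v)) * star (U : Matrix V V ℝ) := by
    intro p
    rw [hspec, aeval_unitary_conj, aeval_diagonal']
  have hcp : A.charpoly = ∏ v, (X - C (μ v)) := by
    rw [hspec, charpoly_unitary_conj, charpoly_diagonal']
  have hrootsμ : (Finset.univ.val.map μ : Multiset ℝ)
      = Finset.univ.val.bind (fun j => Multiset.replicate (m j) (θ j)) := by
    rw [← hroots, hcp]
    have : (∏ v, (X - C (μ v))) = ((Finset.univ.val.map μ).map (fun a => X - C a)).prod := by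
      rw [Multiset.map_map]
      rfl
    rw [this, Polynomial.roots_multiset_prod_X_sub_C]
  have hcount : ∀ j : Fin (d + 1), (Finset.univ.filter (fun v => μ v = θ j)).card = m j := by
    intro j
    have h1 : Multiset.count (θ j) (Finset.univ.val.map μ)
        = (Finset.univ.filter (fun v => μ v = θ j)).card := by
      rw [Multiset.count_map]
      have h0 : Finset.univ.val.filter (fun a => θ j = μ a)
          = Finset.univ.val.filter (fun v => μ v = θ j) :=
        Multiset.filter_congr (fun x _ => eq_comm)
      rw [h0]
      rfl
    have h2 : Multiset.count (θ j)
        (Finset.univ.val.bind (fun l => Multiset.replicate (m l) (θ l))) = m j := by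
      rw [Multiset.count_bind]
      have h3 : Finset.univ.val.map (fun l => Multiset.count (θ j) (Multiset.replicate (m l) (θ l)))
          = Finset.univ.val.map (fun l => if l = j then m l else 0) := by
        apply Multiset.map_congr rfl
        intro l _
        rw [Multiset.count_replicate]
        by_cases h : l = j
        · subst h; simp
        · rw [if_neg (fun hh => h (hθ.injective hh)), if_neg h]
      rw [h3]
      have h4 : (Finset.univ.val.map (fun l => if l = j then m l else 0)).sum
          = ∑ l, if l = j then m l else 0 := rfl
      rw [h4]
      simp
    rw [← h1, hrootsμ]
    exact h2
  have hmemθ : ∀ v : V, ∃ j : Fin (d + 1), μ v = θ j := by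
    intro v
    have hv : μ v ∈ (Finset.univ.val.map μ : Multiset ℝ) :=
      Multiset.mem_map_of_mem μ (Finset.mem_val.mpr (Finset.mem_univ v))
    rw [hrootsμ] at hv
    obtain ⟨j, _, hj⟩ := Multiset.mem_bind.mp hv
    exact ⟨j, Multiset.eq_of_mem_replicate hj⟩
  obtain ⟨u₂, v₂, hu2v2⟩ := hdiam.2
  have hn : 0 < Fintype.card V := Fintype.card_pos_iff.mpr ⟨u₂⟩
  set n : ℝ := (Fintype.card V : ℝ) with hndef
  have hnpos : (0:ℝ) < n := by rw [hndef]; exact_mod_cast hn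
  -- regularity
  set k : ℕ := G.degree u₂ with hkdef
  have hdegall : ∀ v : V, G.degree v = k := by
    intro v
    have h := hwr (X ^ 2) v u₂
    rw [map_pow, aeval_X, pow_two] at h
    rw [SimpleGraph.adjMatrix_mul_self_apply_self, SimpleGraph.adjMatrix_mul_self_apply_self] at h
    exact_mod_cast h
  set o : V → ℝ := Function.const V 1 with hodef
  have hone : A *ᵥ o = (k : ℝ) • o := by
    funext a
    rw [hodef, hAdef, SimpleGraph.adjMatrix_mulVec_const_apply]
    simp [hdegall a]
  have honene : o ≠ 0 := by
    intro h
    have := congrFun h u₂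
    simp [hodef] at this
  -- k is an eigenvalue
  have hUU : (U : Matrix V V ℝ) * star (U : Matrix V V ℝ) = 1 :=
    Matrix.mem_unitaryGroup_iff.mp U.2
  have hUU' : star (U : Matrix V V ℝ) * (U : Matrix V V ℝ) = 1 :=
    Matrix.mem_unitaryGroup_iff'.mp U.2
  have hkeig : ∃ jk : Fin (d + 1), (k : ℝ) = θ jk := by
    set y := star (U : Matrix V V ℝ) *ᵥ o with hydef
    have hy : Matrix.diagonal μ *ᵥ y = (k : ℝ) • y := by
      have h1 : star (U : Matrix V V ℝ) *ᵥ (A *ᵥ o) = (k:ℝ) • y := by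
        rw [hone, Matrix.mulVec_smul]
      rw [hspec] at h1
      rw [Matrix.mulVec_mulVec, ← Matrix.mul_assoc, ← Matrix.mul_assoc, hUU', Matrix.one_mul] at h1
      rw [← Matrix.mulVec_mulVec] at h1
      exact h1
    have hyne : y ≠ 0 := by
      intro h0
      apply honene
      have : (U : Matrix V V ℝ) *ᵥ y = o := by
        rw [hydef, Matrix.mulVec_mulVec, hUU, Matrix.one_mulVec]
      rw [h0, Matrix.mulVec_zero] at this
      exact this.symm
    obtain ⟨v, hv⟩ : ∃ v, y v ≠ 0 := by
      by_contra hc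
      push_neg at hc
      exact hyne (funext hc)
    have := congrFun hy v
    rw [Matrix.mulVec_diagonal] at this
    have hμv : μ v = (k : ℝ) := by
      have : μ v * y v = (k:ℝ) * y v := by simpa using this
      exact mul_right_cancel₀ hv this
    obtain ⟨j, hj⟩ := hmemθ v
    exact ⟨j, by rw [← hμv, hj]⟩
  -- unit eigenvector for θ 0
  have h0card : (Finset.univ.filter (fun v => μ v = θ 0)).card = 1 := by
    rw [hcount 0, hm0]
  obtain ⟨v₁, hv₁⟩ := Finset.card_eq_one.mp h0card
  have hμv₁ : μ v₁ = θ 0 := by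
    have : v₁ ∈ Finset.univ.filter (fun v => μ v = θ 0) := by rw [hv₁]; exact Finset.mem_singleton_self v₁
    exact (Finset.mem_filter.mp this).2
  have hμeq0 : ∀ v : V, μ v = θ 0 ↔ v = v₁ := by
    intro v
    constructor
    · intro h
      have : v ∈ Finset.univ.filter (fun v => μ v = θ 0) := Finset.mem_filter.mpr ⟨Finset.mem_univ v, h⟩
      rw [hv₁] at this
      exact Finset.mem_singleton.mp this
    · rintro rfl; exact hμv₁
  set x : V → ℝ := fun a => (U : Matrix V V ℝ) a v₁ with hxdef
  have hxeig : A *ᵥ x = θ 0 • x := by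
    have hAU : A * (U : Matrix V V ℝ) = (U : Matrix V V ℝ) * Matrix.diagonal μ := by
      rw [hspec, Matrix.mul_assoc, Matrix.mul_assoc, hUU', Matrix.mul_one]
    funext a
    have h1 := congrFun (congrFun hAU a) v₁
    rw [Matrix.mul_apply, Matrix.mul_apply] at h1
    have h2 : ∑ b, (U : Matrix V V ℝ) a b * Matrix.diagonal μ b v₁ = μ v₁ * x a := by
      rw [Finset.sum_eq_single v₁ (fun c _ hc => by rw [Matrix.diagonal_apply_ne _ hc, mul_zero])
        (by simp)]
      rw [Matrix.diagonal_apply_eq]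
      ring
    rw [h2] at h1
    show (∑ b, A a b * x b) = θ 0 * x a
    rw [← hμv₁]
    exact h1
  have hxnorm : ∑ a, x a * x a = 1 := by
    have h1 := congrFun (congrFun hUU' v₁) v₁
    rw [Matrix.mul_apply] at h1
    have h2 : ∀ a, (star (U : Matrix V V ℝ)) v₁ a * (U : Matrix V V ℝ) a v₁ = x a * x a := by
      intro a
      rw [Matrix.star_apply]
      simp [hxdef]
    rw [Finset.sum_congr rfl (fun a _ => h2 a)] at h1
    simpa using h1
  have hxne : x ≠ 0 := by
    intro h
    rw [h] at hxnorm
    simp at hxnorm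
  -- Perron: θ 0 ≤ k
  have hkθ0 : (k : ℝ) = θ 0 := by
    obtain ⟨jk, hjk⟩ := hkeig
    refine le_antisymm (hjk ▸ hθ.antitone (Fin.zero_le jk)) ?_
    obtain ⟨a₀, -, ha₀⟩ := Finset.exists_max_image Finset.univ (fun a => |x a|)
      ⟨u₂, Finset.mem_univ u₂⟩
    have hxa₀ : 0 < |x a₀| := by
      rcases (abs_nonneg (x a₀)).lt_or_eq with h | h
      · exact h
      · exfalso
        apply hxne
        funext a
        have := ha₀ a (Finset.mem_univ a)
        rw [← h] at this
        exact abs_nonpos_iff.mp this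
    have heig := congrFun hxeig a₀
    have hsum : (A *ᵥ x) a₀ = ∑ b, A a₀ b * x b := rfl
    have habs : |θ 0| * |x a₀| ≤ (k:ℝ) * |x a₀| := by
      have h1 : |θ 0 * x a₀| = |(A *ᵥ x) a₀| := by rw [heig]; simp [abs_mul]
      have h2 : |(A *ᵥ x) a₀| ≤ ∑ b, A a₀ b * |x b| := by
        rw [hsum]
        refine (Finset.abs_sum_le_sum_abs _ _).trans ?_
        refine Finset.sum_le_sum (fun b _ => ?_)
        rw [abs_mul]
        have hnn : (0:ℝ) ≤ A a₀ b := by simp [hAdef, SimpleGraph.adjMatrix_apply]; positivity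
        rw [abs_of_nonneg hnn]
      have h3 : ∑ b, A a₀ b * |x b| ≤ ∑ b, A a₀ b * |x a₀| := by
        refine Finset.sum_le_sum (fun b _ => ?_)
        have hnn : (0:ℝ) ≤ A a₀ b := by simp [hAdef, SimpleGraph.adjMatrix_apply]; positivity
        exact mul_le_mul_of_nonneg_left (ha₀ b (Finset.mem_univ b)) hnn
      have h4 : ∑ b, A a₀ b * |x a₀| = (k:ℝ) * |x a₀| := by
        have := SimpleGraph.adjMatrix_mulVec_const_apply (α := ℝ) (G := G) (a := |x a₀|) (v := a₀)
        rw [hdegall a₀] at this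
        rw [← this]
        rfl
      calc |θ 0| * |x a₀| = |θ 0 * x a₀| := (abs_mul _ _).symm
        _ = |(A *ᵥ x) a₀| := h1
        _ ≤ ∑ b, A a₀ b * |x b| := h2
        _ ≤ ∑ b, A a₀ b * |x a₀| := h3
        _ = (k:ℝ) * |x a₀| := h4
    have := le_of_mul_le_mul_right habs hxa₀
    exact (le_abs_self _).trans this
  -- polynomials
  set q : Fin (d + 1) → ℝ[X] := fun l => ∏ j ∈ Finset.univ.erase l, (X - C (θ j)) with hqdef
  have hq_monic : ∀ l, (q l).Monic :=
    fun l => monic_prod_of_monic _ _ (fun j _ => monic_X_sub_C _)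
  have hq_deg : ∀ l, (q l).natDegree = d := by
    intro l
    rw [hqdef]
    simp only
    rw [Polynomial.natDegree_prod_of_monic _ _ (fun j _ => monic_X_sub_C (θ j))]
    simp only [Polynomial.natDegree_X_sub_C]
    rw [Finset.sum_const, Finset.card_erase_of_mem (Finset.mem_univ l), Finset.card_univ,
      Fintype.card_fin]
    simp
  set π' : Fin (d + 1) → ℝ := fun l => ∏ j ∈ Finset.univ.erase l, (θ l - θ j) with hπdef
  have hπabs : ∀ l : Fin (d + 1), Even (l : ℕ) → π' l = ∏ j ∈ Finset.univ.erase l, |θ l - θ j| :=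
    fun l hl => prod_sub_eq_prod_abs θ hθ l hl
  have hπpos : ∀ l : Fin (d + 1), Even (l : ℕ) → 0 < π' l := by
    intro l hl
    rw [hπabs l hl]
    refine Finset.prod_pos (fun j hj => abs_pos.mpr (sub_ne_zero.mpr (fun h => ?_)))
    exact (Finset.ne_of_mem_erase hj) (hθ.injective h).symm
  have h0even : Even (((0 : Fin (d + 1))) : ℕ) := by simp
  have hq_eval_self : ∀ l, (q l).eval (θ l) = π' l := by
    intro l
    rw [hqdef, hπdef]
    simp [Polynomial.eval_prod]
  have hq_eval_other : ∀ l j, j ≠ l → (q l).eval (θ j) = 0 := by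
    intro l j hjl
    rw [hqdef]
    simp only
    rw [Polynomial.eval_prod]
    refine Finset.prod_eq_zero (Finset.mem_erase.mpr ⟨hjl, Finset.mem_univ j⟩) ?_
    simp
  have hw : ∀ l (v : V), (q l).eval (μ v) = if μ v = θ l then π' l else 0 := by
    intro l v
    obtain ⟨j, hj⟩ := hmemθ v
    by_cases h : j = l
    · subst h
      rw [hj, hq_eval_self, if_pos rfl]
    · rw [hj, hq_eval_other l j h, if_neg (fun hc => h (hθ.injective hc))]
  have htrace : ∀ l, Matrix.trace (aeval A (q l)) = π' l * m l := by
    intro l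
    rw [haeval (q l), Matrix.trace_mul_cycle, hUU', Matrix.one_mul, Matrix.trace_diagonal]
    rw [Finset.sum_congr rfl (fun v _ => hw l v), ← Finset.sum_filter, Finset.sum_const,
      hcount l, nsmul_eq_mul]
    ring
  have hdiagN : ∀ l (u : V), (aeval A (q l)) u u = π' l * m l / n := by
    intro l u
    have hsum : ∑ v, (aeval A (q l)) v v = Matrix.trace (aeval A (q l)) := rfl
    rw [Finset.sum_congr rfl (fun v _ => hwr (q l) v u), Finset.sum_const, htrace l,
      nsmul_eq_mul] at hsum
    rw [eq_div_iff hnpos.ne']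
    rw [Finset.card_univ] at hsum
    rw [hndef]
    linarith [hsum]
  have hoffN : ∀ l (u v : V), G.dist u v = d → (aeval A (q l)) u v = (A ^ d) u v := by
    intro l u v hdist
    have h := aeval_entry_dist G u v (q l) (hq_monic l) (by rw [hq_deg l, hdist])
    rw [hdist] at h
    exact h
  -- entries of the Perron projection
  have hN0entry : ∀ a b : V, (aeval A (q 0)) a b = π' 0 * (x a * x b) := by
    intro a b
    rw [haeval (q 0), entry_unitary_diag]
    rw [Finset.sum_congr rfl (fun v _ => by rw [hw 0 v])]
    rw [Finset.sum_eq_single v₁ (fun c _ hc => by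
      rw [if_neg (fun hcc => hc ((hμeq0 c).mp hcc)), zero_mul, zero_mul]) (by simp)]
    rw [if_pos hμv₁]
    ring
  have hs1 : ∀ a : V, x a * (∑ b, x b) = 1 := by
    intro a
    have h1 := congrFun (aeval_mulVec_eigen A o (k : ℝ) hone (q 0)) a
    rw [hkθ0, hq_eval_self 0] at h1
    have h2 : ((aeval A (q 0)) *ᵥ o) a = ∑ b, π' 0 * (x a * x b) := by
      show (∑ b, (aeval A (q 0)) a b * o b) = _
      refine Finset.sum_congr rfl fun b _ => ?_
      rw [hN0entry a b, hodef]
      simp [Function.const]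
    rw [h2] at h1
    have h3 : (π' 0 • o) a = π' 0 := by simp [hodef]
    rw [h3] at h1
    have hπ0 : π' 0 ≠ 0 := (hπpos 0 h0even).ne'
    apply mul_left_cancel₀ hπ0
    rw [mul_one]
    conv_rhs => rw [← h1]
    simp only [Finset.mul_sum]
  have hsne : (∑ b, x b) ≠ 0 := by
    intro h
    have h1 := hs1 u₂
    rw [h, mul_zero] at h1
    exact one_ne_zero h1.symm
  have hxa : ∀ a, x a = (∑ b, x b)⁻¹ :=
    fun a => eq_inv_of_mul_eq_one_left (hs1 a)
  have hs2 : (∑ b, x b) * (∑ b, x b) = n := by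
    have h1 : (1 : ℝ) = ∑ a : V, (∑ b, x b)⁻¹ * (∑ b, x b)⁻¹ := by
      rw [← hxnorm]
      exact Finset.sum_congr rfl fun a _ => by rw [hxa a]
    rw [Finset.sum_const, Finset.card_univ, nsmul_eq_mul, ← hndef] at h1
    have h2 : (∑ b, x b) * (∑ b, x b) * 1
        = (∑ b, x b) * (∑ b, x b) * (n * ((∑ b, x b)⁻¹ * (∑ b, x b)⁻¹)) := by rw [← h1]
    field_simp at h2
    linarith [h2]
  have hxx : ∀ a b : V, x a * x b = 1 / n := by
    intro a b
    rw [hxa a, hxa b, ← mul_inv, hs2]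
    exact (one_div n).symm
  have hAd : ∀ u v : V, G.dist u v = d → (A ^ d) u v = π' 0 / n := by
    intro u v hdist
    rw [← hoffN 0 u v hdist, hN0entry, hxx]
    ring
  -- positive semidefiniteness of the idempotent-like matrix
  have hpsd : ((aeval A) (q i)).PosSemidef := by
    rw [haeval (q i)]
    have hdg : (Matrix.diagonal (fun v => (q i).eval (μ v))).PosSemidef := by
      rw [Matrix.posSemidef_diagonal_iff]
      intro v
      rw [hw i v]
      by_cases h : μ v = θ i
      · rw [if_pos h]; exact (hπpos i hie).le
      · rw [if_neg h]
    have h2 := hdg.mul_mul_conjTranspose_same (U : Matrix V V ℝ)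
    rw [Matrix.star_eq_conjTranspose]
    exact h2
  set aval : ℝ := π' i * m i / n with havaldef
  set cval : ℝ := π' 0 / n with hcvaldef
  have hcpos : 0 < cval := div_pos (hπpos 0 h0even) hnpos
  have hentry : ∀ u v : V, G.dist u v = d → (aeval A) (q i) u v = cval := by
    intro u v hdist
    rw [hoffN i u v hdist, hAd u v hdist]
  have hac : cval ≤ aval := by
    have hne2 : u₂ ≠ v₂ := by
      intro h
      rw [h, SimpleGraph.dist_self] at hu2v2
      omega
    set z : V → ℝ := fun a => (if a = u₂ then 1 else 0) - (if a = v₂ then 1 else 0) with hzdef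
    have h0 := hpsd.dotProduct_mulVec_nonneg z
    have hmv : ∀ a, (((aeval A) (q i)) *ᵥ z) a
        = (aeval A) (q i) a u₂ - (aeval A) (q i) a v₂ := by
      intro a
      show (∑ b, (aeval A) (q i) a b * z b) = _
      have hterm : ∀ b, (aeval A) (q i) a b * z b
          = (if b = u₂ then (aeval A) (q i) a b else 0)
            - (if b = v₂ then (aeval A) (q i) a b else 0) := by
        intro b
        rw [hzdef]
        by_cases h1 : b = u₂ <;> by_cases h2 : b = v₂
        · exact absurd (h1 ▸ h2) hne2
        · simp [h1, h2, hne2, hne2.symm]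
        · simp [h1, h2, hne2, hne2.symm]
        · simp [h1, h2]
      rw [Finset.sum_congr rfl (fun b _ => hterm b), Finset.sum_sub_distrib,
        Finset.sum_ite_eq' Finset.univ u₂, Finset.sum_ite_eq' Finset.univ v₂]
      simp
    have hdot : dotProduct (star z) (((aeval A) (q i)) *ᵥ z)
        = ((aeval A) (q i) u₂ u₂ + (aeval A) (q i) v₂ v₂)
          - ((aeval A) (q i) u₂ v₂ + (aeval A) (q i) v₂ u₂) := by
      rw [star_trivial]
      show (∑ a, z a * (((aeval A) (q i)) *ᵥ z) a) = _
      have hterm : ∀ a, z a * (((aeval A) (q i)) *ᵥ z) a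
          = (if a = u₂ then (((aeval A) (q i)) *ᵥ z) a else 0)
            - (if a = v₂ then (((aeval A) (q i)) *ᵥ z) a else 0) := by
        intro a
        rw [hzdef]
        by_cases h1 : a = u₂ <;> by_cases h2 : a = v₂
        · exact absurd (h1 ▸ h2) hne2
        · simp [h1, h2, hne2, hne2.symm]
        · simp [h1, h2, hne2, hne2.symm]
        · simp [h1, h2]
      rw [Finset.sum_congr rfl (fun a _ => hterm a), Finset.sum_sub_distrib,
        Finset.sum_ite_eq' Finset.univ u₂, Finset.sum_ite_eq' Finset.univ v₂]
      simp only [Finset.mem_univ, if_true]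
      rw [hmv u₂, hmv v₂]
      ring
    rw [hdot] at h0
    have e1 : (aeval A) (q i) u₂ u₂ = aval := by rw [hdiagN i u₂, havaldef]
    have e2 : (aeval A) (q i) v₂ v₂ = aval := by rw [hdiagN i v₂, havaldef]
    have e3 : (aeval A) (q i) u₂ v₂ = cval := hentry u₂ v₂ hu2v2
    have e4 : (aeval A) (q i) v₂ u₂ = cval :=
      hentry v₂ u₂ (by rw [SimpleGraph.dist_comm]; exact hu2v2)
    rw [e1, e2, e3, e4] at h0
    linarith
  have haneqc : aval ≠ cval := by
    intro h
    apply hne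
    rw [← hπabs i hie, ← hπabs 0 h0even]
    rw [havaldef, hcvaldef] at h
    have h1 : π' i * m i = π' 0 := by
      field_simp at h
      exact h
    rw [eq_div_iff (hπpos i hie).ne']
    linarith [h1]
  have havgt : cval < aval := lt_of_le_of_ne hac (fun h => haneqc h.symm)
  -- rank bound
  have hrankN : ((aeval A) (q i)).rank ≤ m i := by
    rw [haeval (q i)]
    refine le_trans (Matrix.rank_mul_le_left _ _) ?_
    refine le_trans (Matrix.rank_mul_le_right _ _) ?_
    rw [Matrix.rank_diagonal]
    rw [Fintype.card_subtype]
    rw [← hcount i]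
    apply le_of_eq
    congr 1
    apply Finset.filter_congr
    intro v _
    rw [hw i v]
    constructor
    · intro hne0
      by_contra hc
      rw [if_neg hc] at hne0
      exact hne0 rfl
    · intro hc
      rw [if_pos hc]
      exact (hπpos i hie).ne'
  -- the k-independence bound
  have hbound : ∀ r ∈ {r | ∃ s : Finset V, s.card = r ∧
      ∀ u ∈ s, ∀ v ∈ s, u ≠ v → d - 1 < G.dist u v}, r ≤ m i := by
    rintro r ⟨s, hcard, hpair⟩
    have hdistd : ∀ u ∈ s, ∀ v ∈ s, u ≠ v → G.dist u v = d := by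
      intro u hu v hv huv
      have h1 := hpair u hu v hv huv
      have h2 := hdiam.1 u v
      omega
    set B : Matrix {v // v ∈ s} {v // v ∈ s} ℝ :=
      ((aeval A) (q i)).submatrix (fun p => (p : V)) (fun p => (p : V)) with hBdef
    have hBentry : ∀ p r' : {v // v ∈ s}, B p r' = if p = r' then aval else cval := by
      intro p r'
      by_cases h : p = r'
      · subst h
        rw [if_pos rfl, hBdef]
        exact hdiagN i (p : V)
      · rw [if_neg h, hBdef]
        have hne' : (p : V) ≠ (r' : V) := fun hc => h (Subtype.ext hc)
        exact hentry _ _ (hdistd _ p.2 _ r'.2 hne')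
    have hBposdef : B.PosDef := by
      refine Matrix.posDef_iff_dotProduct_mulVec.mpr ⟨?_, ?_⟩
      · show Bᴴ = B
        ext p r'
        rw [Matrix.conjTranspose_apply, hBentry, hBentry, star_trivial]
        by_cases h : p = r'
        · rw [if_pos h, if_pos h.symm]
        · rw [if_neg h, if_neg (fun hc => h hc.symm)]
      · intro z hz
        have hzsq : 0 < ∑ p, z p * z p := by
          obtain ⟨p0, hp0⟩ : ∃ p, z p ≠ 0 := by
            by_contra hc
            push_neg at hc
            exact hz (funext hc)
          exact Finset.sum_pos' (fun p _ => mul_self_nonneg _)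
            ⟨p0, Finset.mem_univ p0, mul_self_pos.mpr hp0⟩
        have hrow : ∀ p, (∑ r', B p r' * z r')
            = cval * (∑ r', z r') + (aval - cval) * z p := by
          intro p
          have hterm : ∀ r', B p r' * z r'
              = cval * z r' + (if p = r' then (aval - cval) * z r' else 0) := by
            intro r'
            rw [hBentry p r']
            by_cases h : p = r'
            · rw [if_pos h, if_pos h]; ring
            · rw [if_neg h, if_neg h]; ring
          rw [Finset.sum_congr rfl (fun r' _ => hterm r'), Finset.sum_add_distrib,
            Finset.sum_ite_eq Finset.univ p (fun r' => (aval - cval) * z r'),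
            ← Finset.mul_sum]
          simp
        have hexp : dotProduct (star z) (B *ᵥ z)
            = cval * ((∑ p, z p) * (∑ p, z p)) + (aval - cval) * (∑ p, z p * z p) := by
          rw [star_trivial]
          show (∑ p, z p * ∑ r', B p r' * z r') = _
          rw [Finset.sum_congr rfl (fun p _ => by rw [hrow p])]
          have : ∀ p, z p * (cval * (∑ r', z r') + (aval - cval) * z p)
              = cval * (∑ r', z r') * z p + (aval - cval) * (z p * z p) := by
            intro p; ring
          rw [Finset.sum_congr rfl (fun p _ => this p), Finset.sum_add_distrib,
            ← Finset.mul_sum, ← Finset.mul_sum]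
          ring
        rw [hexp]
        have h1 : 0 ≤ cval * ((∑ p, z p) * (∑ p, z p)) :=
          mul_nonneg hcpos.le (mul_self_nonneg _)
        nlinarith [hzsq, havgt]
    have hr1 : r = B.rank := by
      rw [Matrix.rank_of_isUnit B hBposdef.isUnit, ← hcard, Fintype.card_coe]
    have hr2 : B.rank ≤ ((aeval A) (q i)).rank := by
      set P : Matrix {v // v ∈ s} V ℝ := Matrix.of (fun p v => if (p : V) = v then 1 else 0)
        with hPdef
      have hPN : ∀ (p : {v // v ∈ s}) (w : V), (P * (aeval A) (q i)) p w
          = (aeval A) (q i) (p : V) w := by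
        intro p w
        rw [Matrix.mul_apply]
        rw [Finset.sum_eq_single (p : V) (fun c _ hc => by
          rw [hPdef]
          simp only [Matrix.of_apply]
          rw [if_neg (fun hcc => hc hcc.symm), zero_mul]) (by simp)]
        rw [hPdef]
        simp
      have hfact : B = P * ((aeval A) (q i)) * Pᴴ := by
        ext p r'
        rw [Matrix.mul_apply]
        rw [Finset.sum_eq_single ((r' : V)) (fun c _ hc => by
          rw [Matrix.conjTranspose_apply, hPdef]
          simp only [Matrix.of_apply]
          rw [if_neg (fun hcc => hc hcc.symm), star_zero, mul_zero]) (by simp)]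
        rw [hPN, Matrix.conjTranspose_apply, hPdef]
        simp [hBdef]
      rw [hfact]
      exact le_trans (Matrix.rank_mul_le_left _ _) (Matrix.rank_mul_le_right _ _)
    rw [hr1]
    exact le_trans hr2 hrankN
  show sSup {r | ∃ s : Finset V, s.card = r ∧
      ∀ u ∈ s, ∀ v ∈ s, u ≠ v → d - 1 < G.dist u v} ≤ m i
  refine csSup_le ⟨0, ⟨∅, by simp⟩⟩ hbound
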